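/- Let d ∈ ℕ, a, L ∈ ℝ, b > a, and let f ∈ C([a,b] × ℝ^d, ℝ^d) satisfy ⟨f(s,x) − f(s,y), x − y⟩ ≤ L‖x − y‖² for all s ∈ [a,b], x, y ∈ ℝ^d. Let χ_{t,·}^x : [t,b] → ℝ^d solve χ_{t,s}^x = x + ∫_t^s f(u, χ_{t,u}^x) du. Then ‖χ_{t,s}^x − χ_{t,s}^y‖ ≤ ‖x − y‖·exp(L(s − t)) for all x, y ∈ ℝ^d, t ∈ [a,b], s ∈ [t,b]. -/

import Mathlib

open MeasureTheory intervalIntegral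
open scoped RealInnerProductSpace

/-- Stability estimate for flows of a nonautonomous ODE with a one-sided Lipschitz
vector field `f`: `‖χ_{t,s}^x − χ_{t,s}^y‖ ≤ ‖x − y‖ exp(L(s−t))`. -/
theorem stmt_14 (d : ℕ) (a L b : ℝ) (hab : a < b)
    (f : ℝ → EuclideanSpace ℝ (Fin d) → EuclideanSpace ℝ (Fin d))
    (hf : ContinuousOn (fun p : ℝ × EuclideanSpace ℝ (Fin d) => f p.1 p.2)
      (Set.Icc a b ×ˢ Set.univ))
    (hmono : ∀ s ∈ Set.Icc a b, ∀ x y, ⟪f s x - f s y, x - y⟫ ≤ L * ‖x - y‖ ^ 2)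
    (χ : ℝ → EuclideanSpace ℝ (Fin d) → ℝ → EuclideanSpace ℝ (Fin d))
    (hχc : ∀ t ∈ Set.Icc a b, ∀ x, ContinuousOn (χ t x) (Set.Icc t b))
    (hχ : ∀ t ∈ Set.Icc a b, ∀ x, ∀ s ∈ Set.Icc t b,
      χ t x s = x + ∫ u in t..s, f u (χ t x u)) :
    ∀ x y, ∀ t ∈ Set.Icc a b, ∀ s ∈ Set.Icc t b,
      ‖χ t x s - χ t y s‖ ≤ ‖x - y‖ * Real.exp (L * (s - t)) := by
  intro x y t ht s hs
  obtain ⟨hta, htb⟩ := ht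
  obtain ⟨hts, hsb⟩ := hs
  have hsub : Set.Icc t b ⊆ Set.Icc a b := Set.Icc_subset_Icc hta le_rfl
  -- continuity of u ↦ f u (χ t z u) on [t,b]
  have hFc : ∀ z, ContinuousOn (fun u => f u (χ t z u)) (Set.Icc t b) := by
    intro z
    exact hf.comp (continuousOn_id.prodMk (hχc t ⟨hta, htb⟩ z))
      (fun u hu => ⟨hsub hu, trivial⟩)
  -- derivative of χ t z within Ici s' at s' ∈ Ico t b
  have hd : ∀ z, ∀ s' ∈ Set.Ico t b,
      HasDerivWithinAt (χ t z) (f s' (χ t z s')) (Set.Ici s') s' := by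
    intro z s' hs'
    obtain ⟨hts', hs'b⟩ := hs'
    have hmem : Set.Icc s' b ∈ nhdsWithin s' (Set.Ici s') :=
      Icc_mem_nhdsGE hs'b
    have hmem' : Set.Icc s' b ∈ nhdsWithin s' (Set.Ioi s') :=
      Filter.mem_of_superset (Ioc_mem_nhdsGT hs'b) Set.Ioc_subset_Icc_self
    have hInt : IntervalIntegrable (fun u => f u (χ t z u)) volume t s' := by
      apply ((hFc z).mono _).intervalIntegrable
      rw [Set.uIcc_of_le hts']
      exact Set.Icc_subset_Icc le_rfl hs'b.le
    have hmeas : StronglyMeasurableAtFilter (fun u => f u (χ t z u))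
        (nhdsWithin s' (Set.Ioi s')) volume := by
      refine ⟨Set.Icc s' b, hmem', ?_⟩
      exact ((hFc z).mono (Set.Icc_subset_Icc hts' le_rfl)).aestronglyMeasurable
        measurableSet_Icc
    have hcont : ContinuousWithinAt (fun u => f u (χ t z u)) (Set.Ioi s') s' := by
      have h1 : ContinuousWithinAt (fun u => f u (χ t z u)) (Set.Icc s' b) s' :=
        ((hFc z).mono (Set.Icc_subset_Icc hts' le_rfl)) s' ⟨le_rfl, hs'b.le⟩
      exact h1.mono_of_mem_nhdsWithin hmem'
    have hg : HasDerivWithinAt (fun u => z + ∫ v in t..u, f v (χ t z v))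
        (f s' (χ t z s')) (Set.Ici s') s' :=
      ((integral_hasDerivWithinAt_right hInt hmeas hcont).const_add z)
    refine hg.congr_of_eventuallyEq ?_ ?_
    · filter_upwards [hmem] with u hu
      exact hχ t ⟨hta, htb⟩ z u ⟨hts'.trans hu.1, hu.2⟩
    · exact hχ t ⟨hta, htb⟩ z s' ⟨hts', hs'b.le⟩
  set φ : ℝ → EuclideanSpace ℝ (Fin d) := fun u => χ t x u - χ t y u with hφ
  have hφc : ContinuousOn φ (Set.Icc t b) :=
    (hχc t ⟨hta, htb⟩ x).sub (hχc t ⟨hta, htb⟩ y)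
  have hψc : ContinuousOn (fun u => ⟪φ u, φ u⟫) (Set.Icc t b) := hφc.inner hφc
  have hφt : φ t = x - y := by
    have hx0 := hχ t ⟨hta, htb⟩ x t ⟨le_rfl, htb⟩
    have hy0 := hχ t ⟨hta, htb⟩ y t ⟨le_rfl, htb⟩
    simp only [intervalIntegral.integral_same, add_zero] at hx0 hy0
    simp [hφ, hx0, hy0]
  have key : ∀ u ∈ Set.Icc t b,
      ⟪φ u, φ u⟫ ≤ gronwallBound (‖x - y‖ ^ 2) (2 * L) 0 (u - t) := by
    apply le_gronwallBound_of_liminf_deriv_right_le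
      (f' := fun u => ⟪φ u, f u (χ t x u) - f u (χ t y u)⟫
        + ⟪f u (χ t x u) - f u (χ t y u), φ u⟫) hψc
    · intro u hu r hr
      exact (((hd x u hu).sub (hd y u hu)).inner ℝ
        ((hd x u hu).sub (hd y u hu))).liminf_right_slope_le hr
    · rw [hφt, real_inner_self_eq_norm_sq]
    · intro u hu
      have hm := hmono u (hsub ⟨hu.1, hu.2.le⟩) (χ t x u) (χ t y u)
      have hcomm : ⟪φ u, f u (χ t x u) - f u (χ t y u)⟫
          = ⟪f u (χ t x u) - f u (χ t y u), φ u⟫ := real_inner_comm _ _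
      rw [hcomm, real_inner_self_eq_norm_sq]
      have : ⟪f u (χ t x u) - f u (χ t y u), φ u⟫ ≤ L * ‖φ u‖ ^ 2 := hm
      nlinarith [this]
  have hk := key s ⟨hts, hsb⟩
  rw [gronwallBound_ε0, real_inner_self_eq_norm_sq] at hk
  have hrhs : (‖x - y‖ * Real.exp (L * (s - t))) ^ 2
      = ‖x - y‖ ^ 2 * Real.exp (2 * L * (s - t)) := by
    rw [mul_pow, sq (Real.exp _), ← Real.exp_add]
    ring_nf
  have hnn : (0:ℝ) ≤ ‖x - y‖ * Real.exp (L * (s - t)) := by positivity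
  nlinarith [norm_nonneg (φ s), hk, hrhs, hnn]
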